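/- arXiv:2110.02377 — 3 statements merged into one kernel-verified Lean document; each statement's English description precedes it below -/
import Mathlib

section
/- Let M be a finite-length graded R-module and m an integer such that: h_M(i) ≤ h_M(i+1) for all i < m; h_M(i) ≥ h_M(i+1) for all i ≥ m; [socle M]_i = 0 for all i < m; and M_{i+1} = R₁·M_i for all i > m. Then a linear form ℓ ∈ R₁ is a weak Lefschetz element of M if and only if both multiplication maps ×ℓ : M_{m−1} → M_m and ×ℓ : M_m → M_{m+1} have maximal rank; equivalently, L_M = L_{M,m−1} ∪ L_{M,m}. -/
open MvPolynomial

/-- The multiplication map `×ℓ : M_t → M_{t+1}` has maximal rank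
(is injective or surjective). -/
def MaxRank {k : Type} [Field k] {M : Type} [AddCommGroup M]
    [Module (MvPolynomial (Fin 3) k) M] [Module k M]
    (𝓜 : ℤ → Submodule k M) (ℓ : MvPolynomial (Fin 3) k) (t : ℤ) : Prop :=
  (∀ x ∈ 𝓜 t, ℓ • x = 0 → x = 0) ∨ (∀ y ∈ 𝓜 (t + 1), ∃ x ∈ 𝓜 t, ℓ • x = y)

theorem stmt6 (k : Type) [Field k] [IsAlgClosed k] [CharZero k]
    -- `M` a finite-length graded module over `R = k[x₁,x₂,x₃]`
    (M : Type) [AddCommGroup M] [Module (MvPolynomial (Fin 3) k) M]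
    [Module k M] [IsScalarTower k (MvPolynomial (Fin 3) k) M]
    (𝓜 : ℤ → Submodule k M)
    (hdecomp : DirectSum.IsInternal 𝓜)
    (hsmul : ∀ (j : ℕ) (p : MvPolynomial (Fin 3) k), p.IsHomogeneous j →
      ∀ (i : ℤ), ∀ x ∈ 𝓜 i, p • x ∈ 𝓜 (i + (j : ℤ)))
    (hfd : ∀ i : ℤ, FiniteDimensional k (𝓜 i))
    (hfl : {i : ℤ | 𝓜 i ≠ ⊥}.Finite)
    (m : ℤ)
    -- `h_M(i) ≤ h_M(i+1)` for all `i < m`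
    (hup : ∀ i < m, Module.finrank k (𝓜 i) ≤ Module.finrank k (𝓜 (i + 1)))
    -- `h_M(i) ≥ h_M(i+1)` for all `i ≥ m`
    (hdown : ∀ i, m ≤ i → Module.finrank k (𝓜 (i + 1)) ≤ Module.finrank k (𝓜 i))
    -- `[socle M]_i = 0` for all `i < m`
    (hsoc : ∀ i < m, ∀ x ∈ 𝓜 i,
      (∀ ℓ' : MvPolynomial (Fin 3) k, ℓ'.IsHomogeneous 1 → ℓ' • x = 0) → x = 0)
    -- `M_{i+1} = R₁·M_i` for all `i > m`
    (hgen : ∀ i, m < i → 𝓜 (i + 1) =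
      Submodule.span k {z : M | ∃ ℓ' : MvPolynomial (Fin 3) k,
        ℓ'.IsHomogeneous 1 ∧ ∃ x ∈ 𝓜 i, z = ℓ' • x}) :
    -- `ℓ` is a weak Lefschetz element iff both `×ℓ : M_{m-1} → M_m` and
    -- `×ℓ : M_m → M_{m+1}` have maximal rank
    ∀ ℓ : MvPolynomial (Fin 3) k, ℓ.IsHomogeneous 1 →
      ((∀ t : ℤ, MaxRank 𝓜 ℓ t) ↔ (MaxRank 𝓜 ℓ (m - 1) ∧ MaxRank 𝓜 ℓ m)) := by
  intro ℓ hℓ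
  constructor
  · exact fun h => ⟨h (m - 1), h m⟩
  rintro ⟨hm1, hm⟩ t
  -- membership helper
  have mcong : ∀ {a b : ℤ}, a = b → ∀ x : M, x ∈ 𝓜 a → x ∈ 𝓜 b := by
    rintro a b rfl x hx; exact hx
  have hmem : ∀ (ℓ' : MvPolynomial (Fin 3) k), ℓ'.IsHomogeneous 1 →
      ∀ (i : ℤ), ∀ x ∈ 𝓜 i, ℓ' • x ∈ 𝓜 (i + 1) := by
    intro ℓ' hℓ' i x hx
    simpa using hsmul 1 ℓ' hℓ' i x hx
  -- the bundled multiplication map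
  let φ : ∀ i : ℤ, 𝓜 i →ₗ[k] 𝓜 (i + 1) := fun i =>
    { toFun := fun x => ⟨ℓ • x.1, hmem ℓ hℓ i x.1 x.2⟩
      map_add' := by intro x y; ext; simp [smul_add]
      map_smul' := by intro c x; ext; simp [smul_comm c ℓ] }
  -- surjectivity + dims → injectivity
  have fact1 : ∀ i : ℤ, (∀ y ∈ 𝓜 (i + 1), ∃ x ∈ 𝓜 i, ℓ • x = y) →
      Module.finrank k (𝓜 i) ≤ Module.finrank k (𝓜 (i + 1)) →
      (∀ x ∈ 𝓜 i, ℓ • x = 0 → x = 0) := by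
    intro i hs hle x hx h0
    haveI := hfd i; haveI := hfd (i + 1)
    have hS : Function.Surjective (φ i) := by
      rintro ⟨y, hy⟩
      obtain ⟨x', hx', hxy⟩ := hs y hy
      exact ⟨⟨x', hx'⟩, Subtype.ext hxy⟩
    have hd2 : Module.finrank k (𝓜 (i + 1)) ≤ Module.finrank k (𝓜 i) := by
      have h1 := LinearMap.finrank_range_le (φ i)
      rwa [LinearMap.range_eq_top.2 hS, finrank_top] at h1
    have hI : Function.Injective (φ i) :=
      (LinearMap.injective_iff_surjective_of_finrank_eq_finrank
        (le_antisymm hle hd2)).2 hS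
    have h2 : φ i ⟨x, hx⟩ = 0 := Subtype.ext h0
    have h3 : (⟨x, hx⟩ : 𝓜 i) = 0 := hI (by simpa using h2)
    simpa using congrArg Subtype.val h3
  -- injectivity + dims → surjectivity
  have fact2 : ∀ i : ℤ, (∀ x ∈ 𝓜 i, ℓ • x = 0 → x = 0) →
      Module.finrank k (𝓜 (i + 1)) ≤ Module.finrank k (𝓜 i) →
      (∀ y ∈ 𝓜 (i + 1), ∃ x ∈ 𝓜 i, ℓ • x = y) := by
    intro i hinj hle y hy
    haveI := hfd i; haveI := hfd (i + 1)
    have hI : Function.Injective (φ i) := by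
      rintro ⟨a, ha⟩ ⟨b, hb⟩ hab
      have h1 : ℓ • a = ℓ • b := congrArg Subtype.val hab
      have h2 : ℓ • (a - b) = 0 := by rw [smul_sub, h1, sub_self]
      have h3 := hinj (a - b) (sub_mem ha hb) h2
      exact Subtype.ext (by rwa [sub_eq_zero] at h3)
    have hd1 : Module.finrank k (𝓜 i) ≤ Module.finrank k (𝓜 (i + 1)) :=
      LinearMap.finrank_le_finrank_of_injective hI
    have hS : Function.Surjective (φ i) :=
      (LinearMap.injective_iff_surjective_of_finrank_eq_finrank
        (le_antisymm hd1 hle)).1 hI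
    obtain ⟨⟨x, hx⟩, hxy⟩ := hS ⟨y, hy⟩
    exact ⟨x, hx, congrArg Subtype.val hxy⟩
  -- injectivity at m-1, surjectivity at m (from max rank)
  have injBase : ∀ x ∈ 𝓜 (m - 1), ℓ • x = 0 → x = 0 := by
    rcases hm1 with h | h
    · exact h
    · exact fact1 (m - 1) h (hup (m - 1) (by omega))
  have surjBase : ∀ y ∈ 𝓜 (m + 1), ∃ x ∈ 𝓜 m, ℓ • x = y := by
    rcases hm with h | h
    · exact fact2 m h (hdown m le_rfl)
    · exact h
  -- injectivity propagates downwards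
  have injDown : ∀ i : ℤ, i < m → (∀ x ∈ 𝓜 (i + 1), ℓ • x = 0 → x = 0) →
      (∀ x ∈ 𝓜 i, ℓ • x = 0 → x = 0) := by
    intro i hi hnext x hx h0
    apply hsoc i hi x hx
    intro ℓ' hℓ'
    apply hnext (ℓ' • x) (hmem ℓ' hℓ' i x hx)
    rw [← mul_smul, mul_comm, mul_smul, h0, smul_zero]
  -- surjectivity propagates upwards
  have surjUp : ∀ i : ℤ, m ≤ i → (∀ y ∈ 𝓜 (i + 1), ∃ x ∈ 𝓜 i, ℓ • x = y) →
      (∀ y ∈ 𝓜 (i + 1 + 1), ∃ x ∈ 𝓜 (i + 1), ℓ • x = y) := by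
    intro i hi hs y hy
    -- the image ℓ • 𝓜 (i+1) as a submodule
    let lm : M →ₗ[k] M :=
      { toFun := fun x => ℓ • x
        map_add' := fun a b => smul_add ℓ a b
        map_smul' := fun c a => (smul_comm c ℓ a).symm }
    have hle : 𝓜 (i + 1 + 1) ≤ (𝓜 (i + 1)).map lm := by
      rw [hgen (i + 1) (by omega)]
      apply Submodule.span_le.2
      rintro z ⟨ℓ', hℓ', x, hx, rfl⟩
      obtain ⟨w, hw, hwx⟩ := hs x hx
      refine ⟨ℓ' • w, hmem ℓ' hℓ' i w hw, ?_⟩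
      show ℓ • ℓ' • w = ℓ' • x
      rw [← mul_smul, mul_comm, mul_smul, hwx]
    obtain ⟨x, hx, hxy⟩ := hle hy
    exact ⟨x, hx, hxy⟩
  -- downward induction
  have injAll : ∀ n : ℕ, ∀ x ∈ 𝓜 (m - 1 - n), ℓ • x = 0 → x = 0 := by
    intro n
    induction n with
    | zero => intro x hx; exact injBase x (mcong (by push_cast; ring) x hx)
    | succ n ih =>
      intro x hx h0
      refine injDown (m - 1 - (n + 1 : ℕ)) (by push_cast; omega) ?_ x hx h0
      intro y hy hy0
      exact ih y (mcong (by push_cast; ring) y hy) hy0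
  -- upward induction
  have surjAll : ∀ n : ℕ, ∀ y ∈ 𝓜 (m + n + 1), ∃ x ∈ 𝓜 (m + n), ℓ • x = y := by
    intro n
    induction n with
    | zero =>
      intro y hy
      obtain ⟨x, hx, hxy⟩ := surjBase y (mcong (by push_cast; ring) y hy)
      exact ⟨x, mcong (by push_cast; ring) x hx, hxy⟩
    | succ n ih =>
      intro y hy
      have h1 : ∀ y ∈ 𝓜 (m + n + 1 + 1), ∃ x ∈ 𝓜 (m + n + 1), ℓ • x = y :=
        surjUp (m + n) (by omega) ih
      obtain ⟨x, hx, hxy⟩ := h1 y (mcong (by push_cast; ring) y hy)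
      exact ⟨x, mcong (by push_cast; ring) x hx, hxy⟩
  -- conclude
  by_cases ht : t < m
  · left
    intro x hx h0
    exact injAll (m - 1 - t).toNat x (mcong (by omega) x hx) h0
  · right
    intro y hy
    obtain ⟨x, hx, hxy⟩ := surjAll (t - m).toNat y (mcong (by omega) y hy)
    exact ⟨x, mcong (by omega) x hx, hxy⟩
end

section
/- Let M be a finite-length graded R-module and m an integer such that: h_M(i) ≤ h_M(i+1) for all i < m; h_M(i) ≥ h_M(i+1) for all i ≥ m; [socle M]_i = 0 for all i < m; M_{i+1} = R₁·M_i for all i > m; and moreover h_M(m) = h_M(m+1). Then a linear form ℓ ∈ R₁ is a weak Lefschetz element of M if and only if the multiplication map ×ℓ : M_m → M_{m+1} is bijective; equivalently, L_M = L_{M,m}. -/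
open MvPolynomial

theorem stmt7 (k : Type) [Field k] [IsAlgClosed k] [CharZero k]
    -- `M` a finite-length graded module over `R = k[x₁,x₂,x₃]`
    (M : Type) [AddCommGroup M] [Module (MvPolynomial (Fin 3) k) M]
    [Module k M] [IsScalarTower k (MvPolynomial (Fin 3) k) M]
    (𝓜 : ℤ → Submodule k M)
    (hdecomp : DirectSum.IsInternal 𝓜)
    (hsmul : ∀ (j : ℕ) (p : MvPolynomial (Fin 3) k), p.IsHomogeneous j →
      ∀ (i : ℤ), ∀ x ∈ 𝓜 i, p • x ∈ 𝓜 (i + (j : ℤ)))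
    (hfd : ∀ i : ℤ, FiniteDimensional k (𝓜 i))
    (hfl : {i : ℤ | 𝓜 i ≠ ⊥}.Finite)
    (m : ℤ)
    -- `h_M(i) ≤ h_M(i+1)` for all `i < m`
    (hup : ∀ i < m, Module.finrank k (𝓜 i) ≤ Module.finrank k (𝓜 (i + 1)))
    -- `h_M(i) ≥ h_M(i+1)` for all `i ≥ m`
    (hdown : ∀ i, m ≤ i → Module.finrank k (𝓜 (i + 1)) ≤ Module.finrank k (𝓜 i))
    -- `[socle M]_i = 0` for all `i < m`
    (hsoc : ∀ i < m, ∀ x ∈ 𝓜 i,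
      (∀ ℓ' : MvPolynomial (Fin 3) k, ℓ'.IsHomogeneous 1 → ℓ' • x = 0) → x = 0)
    -- `M_{i+1} = R₁·M_i` for all `i > m`
    (hgen : ∀ i, m < i → 𝓜 (i + 1) =
      Submodule.span k {z : M | ∃ ℓ' : MvPolynomial (Fin 3) k,
        ℓ'.IsHomogeneous 1 ∧ ∃ x ∈ 𝓜 i, z = ℓ' • x})
    -- moreover `h_M(m) = h_M(m+1)`
    (heq : Module.finrank k (𝓜 m) = Module.finrank k (𝓜 (m + 1))) :
    -- `ℓ` is a weak Lefschetz element iff `×ℓ : M_m → M_{m+1}` is bijective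
    ∀ ℓ : MvPolynomial (Fin 3) k, ℓ.IsHomogeneous 1 →
      ((∀ t : ℤ, MaxRank 𝓜 ℓ t) ↔
        ((∀ x ∈ 𝓜 m, ℓ • x = 0 → x = 0) ∧
         (∀ y ∈ 𝓜 (m + 1), ∃ x ∈ 𝓜 m, ℓ • x = y))) := by
  intro ℓ hℓ
  -- the multiplication-by-ℓ map as a k-linear endomorphism of M
  let F : M →ₗ[k] M :=
    { toFun := fun x => ℓ • x
      map_add' := fun a b => smul_add ℓ a b
      map_smul' := fun c x => smul_comm ℓ c x }
  have hFapp : ∀ x : M, F x = ℓ • x := fun _ => rfl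
  have hmem : ∀ (ℓ' : MvPolynomial (Fin 3) k), ℓ'.IsHomogeneous 1 →
      ∀ (i : ℤ), ∀ x ∈ 𝓜 i, ℓ' • x ∈ 𝓜 (i + 1) := by
    intro ℓ' h i x hx
    simpa using hsmul 1 ℓ' h i x hx
  haveI := hfd m; haveI := hfd (m + 1)
  let f : 𝓜 m →ₗ[k] 𝓜 (m + 1) := LinearMap.restrict F (fun x hx => hmem ℓ hℓ m x hx)
  have hfcoe : ∀ x : 𝓜 m, (f x : M) = ℓ • (x : M) := fun _ => rfl
  have hinj_iff : Function.Injective f ↔ (∀ x ∈ 𝓜 m, ℓ • x = 0 → x = 0) := by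
    constructor
    · intro h x hx hx0
      have : (⟨x, hx⟩ : 𝓜 m) = 0 := by
        apply h
        apply Subtype.ext
        simp [hfcoe, hx0]
      simpa using congrArg Subtype.val this
    · intro h a b hab
      have : ((a - b : 𝓜 m) : M) = 0 := by
        apply h _ (a - b).2
        have := congrArg Subtype.val hab
        simp only [hfcoe] at this
        simp [smul_sub, this]
      exact Subtype.ext (by simpa [sub_eq_zero] using this)
  have hsurj_iff : Function.Surjective f ↔
      (∀ y ∈ 𝓜 (m + 1), ∃ x ∈ 𝓜 m, ℓ • x = y) := by
    constructor
    · intro h y hy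
      obtain ⟨x, hx⟩ := h ⟨y, hy⟩
      exact ⟨x, x.2, by simpa [hfcoe] using congrArg Subtype.val hx⟩
    · rintro h ⟨y, hy⟩
      obtain ⟨x, hx, hxy⟩ := h y hy
      exact ⟨⟨x, hx⟩, Subtype.ext (by simpa [hfcoe] using hxy)⟩
  have hbij : Function.Injective f ↔ Function.Surjective f :=
    LinearMap.injective_iff_surjective_of_finrank_eq_finrank heq
  constructor
  · -- weak Lefschetz ⇒ bijective in degree m
    intro hall
    rcases hall m with h | h
    · exact ⟨h, hsurj_iff.mp (hbij.mp (hinj_iff.mpr h))⟩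
    · exact ⟨hinj_iff.mp (hbij.mpr (hsurj_iff.mpr h)), h⟩
  · rintro ⟨hinj, hsurj⟩
    -- injectivity in all degrees ≤ m, by downward induction using the socle condition
    have injAll : ∀ t, t ≤ m → (∀ x ∈ 𝓜 t, ℓ • x = 0 → x = 0) := by
      refine Int.le_induction_down hinj ?_
      intro n hn ih x hx hx0
      apply hsoc (n - 1) (by omega) x hx
      intro ℓ' hℓ'
      apply ih (ℓ' • x) (by simpa using hmem ℓ' hℓ' (n - 1) x hx)
      calc ℓ • ℓ' • x = ℓ' • ℓ • x := by
            rw [smul_smul, mul_comm, ← smul_smul]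
        _ = 0 := by rw [hx0, smul_zero]
    -- surjectivity in all degrees ≥ m, by upward induction using the generation condition
    have surjAll : ∀ t, m ≤ t → (∀ y ∈ 𝓜 (t + 1), ∃ x ∈ 𝓜 t, ℓ • x = y) := by
      refine Int.le_induction hsurj ?_
      intro n hn ih y hy
      rw [hgen (n + 1) (by omega)] at hy
      have hle : Submodule.span k {z : M | ∃ ℓ' : MvPolynomial (Fin 3) k,
          ℓ'.IsHomogeneous 1 ∧ ∃ x ∈ 𝓜 (n + 1), z = ℓ' • x} ≤
          Submodule.map F (𝓜 (n + 1)) := by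
        apply Submodule.span_le.mpr
        rintro z ⟨ℓ', hℓ', x, hx, rfl⟩
        obtain ⟨w, hw, hwx⟩ := ih x hx
        refine ⟨ℓ' • w, hmem ℓ' hℓ' n w hw, ?_⟩
        rw [hFapp, smul_smul, mul_comm, ← smul_smul, hwx]
      obtain ⟨x, hx, hxy⟩ := hle hy
      exact ⟨x, hx, hxy⟩
    intro t
    rcases le_or_gt t m with h | h
    · exact Or.inl (injAll t h)
    · exact Or.inr (surjAll t h.le)
end

section
/- Let M be a graded R-module, ℓ ∈ R₁ a linear form, and i an integer. If the multiplication map ×ℓ : M_{i+1} → M_{i+2} is injective and [socle M]_i = 0 (no nonzero element of M_i is annihilated by every linear form), then the multiplication map ×ℓ : M_i → M_{i+1} is injective. -/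
open MvPolynomial

theorem stmt8 (k : Type) [Field k] [IsAlgClosed k] [CharZero k]
    -- `M` a graded module over `R = k[x₁,x₂,x₃]`
    (M : Type) [AddCommGroup M] [Module (MvPolynomial (Fin 3) k) M]
    [Module k M] [IsScalarTower k (MvPolynomial (Fin 3) k) M]
    (𝓜 : ℤ → Submodule k M)
    (hdecomp : DirectSum.IsInternal 𝓜)
    (hsmul : ∀ (m : ℕ) (p : MvPolynomial (Fin 3) k), p.IsHomogeneous m →
      ∀ (i : ℤ), ∀ x ∈ 𝓜 i, p • x ∈ 𝓜 (i + (m : ℤ)))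
    -- `ℓ ∈ R₁` a linear form, `i` an integer
    (ℓ : MvPolynomial (Fin 3) k) (hℓ : ℓ.IsHomogeneous 1) (i : ℤ)
    -- `×ℓ : M_{i+1} → M_{i+2}` is injective
    (hinj : ∀ x ∈ 𝓜 (i + 1), ℓ • x = 0 → x = 0)
    -- `[socle M]_i = 0`
    (hsoc : ∀ x ∈ 𝓜 i,
      (∀ ℓ' : MvPolynomial (Fin 3) k, ℓ'.IsHomogeneous 1 → ℓ' • x = 0) → x = 0) :
    -- then `×ℓ : M_i → M_{i+1}` is injective
    ∀ x ∈ 𝓜 i, ℓ • x = 0 → x = 0 := by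
  intro x hx hlx
  apply hsoc x hx
  intro ℓ' hℓ'
  apply hinj
  · simpa using hsmul 1 ℓ' hℓ' i x hx
  · calc ℓ • ℓ' • x = ℓ' • ℓ • x := smul_comm ℓ ℓ' x
      _ = 0 := by rw [hlx, smul_zero]
end
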